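/- The best approximation with bounded TT-ranks exists: for any real tensor A of shape n_1 × … × n_d and any rank bounds (r_1,…,r_{d−1}), the infimum of ‖A − B‖_F over the set of tensors B of the same shape with rank(B^{⟨k⟩}) ≤ r_k for all k = 1,…,d−1 is attained by some tensor B*. -/

import Mathlib

open scoped BigOperators
open Matrix

/-- A `d`-dimensional real tensor of shape `n 0 × ⋯ × n (d-1)`. -/
abbrev Tensor {d : ℕ} (n : Fin d → ℕ) : Type := (∀ i, Fin (n i)) → ℝ

/-- The `k`-th sequential unfolding `A⟨k⟩`: rows indexed by the first `k`
indices, columns indexed by the remaining ones. -/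
def seqUnfold {d : ℕ} {n : Fin d → ℕ} (A : Tensor n) (k : ℕ) :
    Matrix (∀ i : {j : Fin d // j.val < k}, Fin (n i.1))
      (∀ i : {j : Fin d // ¬ j.val < k}, Fin (n i.1)) ℝ :=
  fun a b => A fun i => if h : i.val < k then a ⟨i, h⟩ else b ⟨i, h⟩

/-- Frobenius norm of a tensor. -/
noncomputable def frobNorm {d : ℕ} {n : Fin d → ℕ} (X : Tensor n) : ℝ :=
  Real.sqrt (∑ i, X i ^ 2)

section AuxRank

variable {m n' : Type*} [Fintype m] [Fintype n'] [DecidableEq n']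

lemma gram_det_eq_zero_of_rank_le (M : Matrix m n' ℝ) {r : ℕ} (h : M.rank ≤ r)
    (f : Fin (r + 1) → n') :
    ((M.submatrix id f)ᵀ * (M.submatrix id f)).det = 0 := by
  set N := M.submatrix id f with hNdef
  have hN : N = M * ((1 : Matrix n' n' ℝ).submatrix id f) := by
    ext x i
    simp [hNdef, Matrix.mul_apply, Matrix.one_apply, Matrix.submatrix]
  have h1 : N.rank ≤ r := by
    rw [hN]; exact (Matrix.rank_mul_le_left _ _).trans h
  by_contra hdet
  have hu : IsUnit (Nᵀ * N) :=
    (Matrix.isUnit_iff_isUnit_det _).mpr (isUnit_iff_ne_zero.mpr hdet)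
  have := Matrix.rank_of_isUnit _ hu
  rw [Matrix.rank_transpose_mul_self] at this
  rw [this] at h1
  simp [Fintype.card_fin] at h1

lemma rank_le_of_gram_det (M : Matrix m n' ℝ) {r : ℕ}
    (h : ∀ f : Fin (r + 1) → n',
      ((M.submatrix id f)ᵀ * (M.submatrix id f)).det = 0) :
    M.rank ≤ r := by
  by_contra hr
  push_neg at hr
  have hr' : r + 1 ≤ M.rank := hr
  rw [Matrix.rank_eq_finrank_span_cols] at hr'
  obtain ⟨b, hbsub, hbspan, hbind⟩ := exists_linearIndependent ℝ (Set.range Mᵀ)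
  haveI : Fintype b := ((Set.finite_range Mᵀ).subset hbsub).fintype
  have hcard : Module.finrank ℝ (Submodule.span ℝ b) = b.toFinset.card :=
    finrank_span_set_eq_card hbind
  have hcard' : r + 1 ≤ Fintype.card b := by
    rw [show Set.range M.col = Set.range Mᵀ from rfl, ← hbspan, hcard] at hr'
    simpa [Set.toFinset_card] using hr'
  obtain ⟨e⟩ : Nonempty (Fin (r + 1) ↪ b) :=
    Function.Embedding.nonempty_of_card_le (by simpa using hcard')
  have hv : LinearIndependent ℝ (fun i : Fin (r + 1) => ((e i : b) : m → ℝ)) :=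
    hbind.comp e e.injective
  choose f hf using fun i : Fin (r + 1) => hbsub (e i).2
  set N := M.submatrix id f with hNdef
  have hNT : Nᵀ = fun i => ((e i : b) : m → ℝ) := by
    ext i x
    have := hf i
    calc Nᵀ i x = Mᵀ (f i) x := rfl
    _ = ((e i : b) : m → ℝ) x := by rw [this]
  have hrank : Nᵀ.rank = r + 1 := by
    rw [hNT]
    have := (hNT ▸ hv : LinearIndependent ℝ (Nᵀ : Fin (r+1) → m → ℝ))
    simpa using hv.rank_matrix
  have hrankN : (Nᵀ * N).rank = r + 1 := by
    rw [Matrix.rank_transpose_mul_self, ← Matrix.rank_transpose, hrank]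
  obtain ⟨v, hv0, hvz⟩ := (Matrix.exists_mulVec_eq_zero_iff.mpr (h f))
  have hker : v ∈ LinearMap.ker (Nᵀ * N).mulVecLin := by
    simpa only [LinearMap.mem_ker, Matrix.mulVecLin_apply] using hvz
  have hsum := LinearMap.finrank_range_add_finrank_ker (Nᵀ * N).mulVecLin
  have hkz : Module.finrank ℝ (LinearMap.ker (Nᵀ * N).mulVecLin) = 0 := by
    have : Module.finrank ℝ (∀ _ : Fin (r+1), ℝ) = r + 1 := by simp
    rw [this] at hsum
    have : (Nᵀ * N).rank = Module.finrank ℝ (LinearMap.range (Nᵀ * N).mulVecLin) := rfl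
    omega
  have : LinearMap.ker (Nᵀ * N).mulVecLin = ⊥ :=
    Submodule.finrank_eq_zero.mp hkz
  rw [this] at hker
  exact hv0 (by simpa using hker)

lemma isClosed_rank_le (r : ℕ) : IsClosed {M : Matrix m n' ℝ | M.rank ≤ r} := by
  have h : {M : Matrix m n' ℝ | M.rank ≤ r} =
      ⋂ f : Fin (r + 1) → n',
        {M : Matrix m n' ℝ | ((M.submatrix id f)ᵀ * (M.submatrix id f)).det = 0} := by
    ext M
    simp only [Set.mem_iInter, Set.mem_setOf_eq]
    exact ⟨fun h f => gram_det_eq_zero_of_rank_le M h f, fun h => rank_le_of_gram_det M h⟩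
  rw [h]
  refine isClosed_iInter fun f => isClosed_eq ?_ continuous_const
  exact (((continuous_id.matrix_submatrix id f).matrix_transpose).matrix_mul
    (continuous_id.matrix_submatrix id f)).matrix_det

end AuxRank

/-- the best approximation with TT-ranks bounded by
`(r 1, …, r (d−1))` exists: the infimum of `‖A − B‖_F` over all tensors `B`
with `rank (B⟨k⟩) ≤ r k` for `k = 1,…,d−1` is attained by some `B*`. -/
theorem tt_best_approx_exists {d : ℕ} {n : Fin d → ℕ} (A : Tensor n)
    (r : ℕ → ℕ) :
    ∃ Bstar : Tensor n,
      (∀ k : ℕ, 1 ≤ k → k ≤ d - 1 → (seqUnfold Bstar k).rank ≤ r k) ∧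
      frobNorm (A - Bstar) =
        sInf {t : ℝ | ∃ B : Tensor n,
          (∀ k : ℕ, 1 ≤ k → k ≤ d - 1 → (seqUnfold B k).rank ≤ r k) ∧
          t = frobNorm (A - B)} := by
  classical
  set S : Set (Tensor n) :=
    {B | ∀ k : ℕ, 1 ≤ k → k ≤ d - 1 → (seqUnfold B k).rank ≤ r k} with hS
  have hfrob_cont : Continuous (frobNorm : Tensor n → ℝ) := by
    unfold frobNorm
    exact Real.continuous_sqrt.comp
      (continuous_finset_sum _ fun i _ => (continuous_apply i).pow 2)
  have hf_cont : Continuous (fun B : Tensor n => frobNorm (A - B)) :=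
    hfrob_cont.comp (continuous_const.sub continuous_id)
  have hS_closed : IsClosed S := by
    have hrepr : S = ⋂ k : ℕ,
        {B : Tensor n | 1 ≤ k → k ≤ d - 1 → (seqUnfold B k).rank ≤ r k} := by
      ext B; simp [hS, Set.mem_iInter]
    rw [hrepr]
    refine isClosed_iInter fun k => ?_
    by_cases hk : 1 ≤ k ∧ k ≤ d - 1
    · have : {B : Tensor n | 1 ≤ k → k ≤ d - 1 → (seqUnfold B k).rank ≤ r k} =
          (fun B : Tensor n => seqUnfold B k) ⁻¹' {M | M.rank ≤ r k} := by
        ext B; simp [hk.1, hk.2]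
      rw [this]
      have hcont : Continuous (fun B : Tensor n => seqUnfold B k) := by
        apply continuous_matrix
        intro a b
        exact continuous_apply _
      exact (isClosed_rank_le (r k)).preimage hcont
    · have : {B : Tensor n | 1 ≤ k → k ≤ d - 1 → (seqUnfold B k).rank ≤ r k} =
          Set.univ := by
        ext B; simp only [Set.mem_setOf_eq, Set.mem_univ, iff_true]
        intro h1 h2; exact absurd ⟨h1, h2⟩ hk
      rw [this]; exact isClosed_univ
  have h0S : (0 : Tensor n) ∈ S := by
    intro k _ _
    have hz : seqUnfold (0 : Tensor n) k = 0 := rfl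
    rw [hz, Matrix.rank_zero]
    exact Nat.zero_le _
  set c := frobNorm (A - 0) with hc
  have hbound : ∀ X : Tensor n, ∀ i, |X i| ≤ frobNorm X := by
    intro X i
    rw [frobNorm, ← Real.sqrt_sq_eq_abs]
    exact Real.sqrt_le_sqrt
      (Finset.single_le_sum (fun j _ => sq_nonneg (X j)) (Finset.mem_univ i))
  have hc0 : 0 ≤ c := Real.sqrt_nonneg _
  set K := S ∩ {B : Tensor n | frobNorm (A - B) ≤ c} with hK
  have hK0 : (0 : Tensor n) ∈ K := ⟨h0S, le_refl c⟩
  have hKsub : K ⊆ Metric.closedBall 0 (‖A‖ + c) := by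
    intro B hB
    rw [Metric.mem_closedBall, dist_zero_right]
    refine (pi_norm_le_iff_of_nonneg (by positivity)).mpr fun i => ?_
    have h1 : |(A - B) i| ≤ c := (hbound _ i).trans hB.2
    have h2 : |A i| ≤ ‖A‖ := by
      simpa [Real.norm_eq_abs] using norm_le_pi_norm A i
    have hBi : B i = A i + (-((A - B) i)) := by simp
    rw [Real.norm_eq_abs, hBi]
    calc |A i + (-((A - B) i))| ≤ |A i| + |(-((A - B) i))| := abs_add_le _ _
      _ = |A i| + |(A - B) i| := by rw [abs_neg]
      _ ≤ ‖A‖ + c := add_le_add h2 h1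
  have hK_closed : IsClosed K :=
    hS_closed.inter (isClosed_le hf_cont continuous_const)
  have hK_compact : IsCompact K :=
    (isCompact_closedBall (0 : Tensor n) (‖A‖ + c)).of_isClosed_subset hK_closed hKsub
  obtain ⟨Bstar, hBK, hmin⟩ :=
    hK_compact.exists_isMinOn ⟨0, hK0⟩ hf_cont.continuousOn
  refine ⟨Bstar, hBK.1, ?_⟩
  have hmin' : ∀ B ∈ K, frobNorm (A - Bstar) ≤ frobNorm (A - B) :=
    fun B hB => hmin hB
  have hbdd : BddBelow {t : ℝ | ∃ B : Tensor n,
      (∀ k : ℕ, 1 ≤ k → k ≤ d - 1 → (seqUnfold B k).rank ≤ r k) ∧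
      t = frobNorm (A - B)} := by
    refine ⟨0, fun t ht => ?_⟩
    obtain ⟨B, _, rfl⟩ := ht
    exact Real.sqrt_nonneg _
  have hmemT : frobNorm (A - Bstar) ∈ {t : ℝ | ∃ B : Tensor n,
      (∀ k : ℕ, 1 ≤ k → k ≤ d - 1 → (seqUnfold B k).rank ≤ r k) ∧
      t = frobNorm (A - B)} := ⟨Bstar, hBK.1, rfl⟩
  refine le_antisymm ?_ (csInf_le hbdd hmemT)
  refine le_csInf ⟨_, hmemT⟩ ?_
  rintro t ⟨B, hBS, rfl⟩
  rcases le_or_gt (frobNorm (A - B)) c with hle | hlt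
  · exact hmin' B ⟨hBS, hle⟩
  · exact le_of_lt (lt_of_le_of_lt (hmin' 0 hK0) hlt)
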